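/- (Quantum state distinguishability via the local energy.) Let θ ∈ ℝ be the QET-optimal angle, i.e. cos 2θ = (h²+2k²)/√((h²+2k²)² + (hk)²) and sin 2θ = hk/√((h²+2k²)² + (hk)²). Then for every μ ∈ {−1,+1}: Tr[ρ(μ,μ,θ)·(H₂+V)] < 0 while Tr[ρ(μ,−μ,θ)·(H₂+V)] > 0; hence the prover can distinguish whether the verifier applied Q₁ = U_B(μ,θ) or Q₂ = U_B(−μ,θ) from the sign of the observed local energy. -/

import Mathlib

open Matrix Kronecker
open scoped ComplexOrder

noncomputable section

abbrev M2 : Type := Matrix (Fin 2) (Fin 2) ℂ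
abbrev M4 : Type := Matrix (Fin 2 × Fin 2) (Fin 2 × Fin 2) ℂ

/-- Pauli X matrix. -/
def σx : M2 := !![0, 1; 1, 0]
/-- Pauli Y matrix. -/
def σy : M2 := !![0, -Complex.I; Complex.I, 0]
/-- Pauli Z matrix. -/
def σz : M2 := !![1, 0; 0, -1]

def X1 : M4 := σx ⊗ₖ (1 : M2)
def Z1 : M4 := σz ⊗ₖ (1 : M2)
def Z2 : M4 := (1 : M2) ⊗ₖ σz
def Y2 : M4 := (1 : M2) ⊗ₖ σy
def XX : M4 := σx ⊗ₖ σx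

def H1m (k h : ℝ) : M4 := (h : ℂ) • Z1 + ((h ^ 2 / Real.sqrt (h ^ 2 + k ^ 2) : ℝ) : ℂ) • (1 : M4)
def H2m (k h : ℝ) : M4 := (h : ℂ) • Z2 + ((h ^ 2 / Real.sqrt (h ^ 2 + k ^ 2) : ℝ) : ℂ) • (1 : M4)
def Vm (k h : ℝ) : M4 :=
  ((2 * k : ℝ) : ℂ) • XX + ((2 * k ^ 2 / Real.sqrt (h ^ 2 + k ^ 2) : ℝ) : ℂ) • (1 : M4)
def Hm (k h : ℝ) : M4 := H1m k h + H2m k h + Vm k h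

def e00 : (Fin 2 × Fin 2) → ℂ := fun p => if p = (0, 0) then 1 else 0
def e11 : (Fin 2 × Fin 2) → ℂ := fun p => if p = (1, 1) then 1 else 0

/-- the ground state of the minimal QET Hamiltonian -/
def gs (k h : ℝ) : (Fin 2 × Fin 2) → ℂ := fun p =>
  ((1 / Real.sqrt 2 * Real.sqrt (1 - h / Real.sqrt (h ^ 2 + k ^ 2)) : ℝ) : ℂ) * e00 p
  - ((1 / Real.sqrt 2 * Real.sqrt (1 + h / Real.sqrt (h ^ 2 + k ^ 2)) : ℝ) : ℂ) * e11 p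

/-- the rank-one operator |g⟩⟨g| -/
def gProj (k h : ℝ) : M4 := Matrix.vecMulVec (gs k h) (star (gs k h))

/-- Alice's projective measurement operator -/
def PA (μ : ℝ) : M4 := (2 : ℂ)⁻¹ • ((1 : M4) + (μ : ℂ) • X1)

/-- Bob's conditional unitary -/
def UB (ν θ : ℝ) : M4 :=
  ((Real.cos θ : ℝ) : ℂ) • (1 : M4) - ((Complex.I * ν * Real.sin θ) : ℂ) • Y2

/-- the post-protocol state -/
def ρQET (k h θ : ℝ) : M4 :=
  UB (-1) θ * PA (-1) * gProj k h * PA (-1) * (UB (-1) θ)ᴴ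
  + UB 1 θ * PA 1 * gProj k h * PA 1 * (UB 1 θ)ᴴ

/-- the normalized post-measurement state with prover outcome μ and verifier operation UB ν θ -/
def ρMN (k h μ ν θ : ℝ) : M4 := (2 : ℂ) • (UB ν θ * PA μ * gProj k h * PA μ * (UB ν θ)ᴴ)

set_option maxHeartbeats 1000000

lemma outer_conj (A : M4) (v : (Fin 2 × Fin 2) → ℂ) :
    A * Matrix.vecMulVec v (star v) * Aᴴ = Matrix.vecMulVec (A *ᵥ v) (star (A *ᵥ v)) := by
  ext i j
  simp only [Matrix.mul_apply, Matrix.vecMulVec_apply, Matrix.conjTranspose_apply,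
    Matrix.mulVec, dotProduct, Pi.star_apply, star_sum, star_add, star_mul',
    Fintype.sum_prod_type, Fin.sum_univ_two, Finset.sum_mul, Finset.mul_sum]
  ring

lemma trace_vmv (v w : (Fin 2 × Fin 2) → ℂ) (M : M4) :
    (Matrix.vecMulVec v w * M).trace = w ⬝ᵥ (M *ᵥ v) := by
  simp only [Matrix.trace, Matrix.diag, Matrix.mul_apply, Matrix.vecMulVec_apply,
    dotProduct, Matrix.mulVec, Fintype.sum_prod_type, Fin.sum_univ_two,
    Finset.mul_sum]
  ring

lemma PA_herm (μ : ℝ) : (PA μ)ᴴ = PA μ := by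
  ext ⟨i,j⟩ ⟨i',j'⟩
  fin_cases i <;> fin_cases j <;> fin_cases i' <;> fin_cases j' <;>
    simp [PA, X1, σx, Matrix.conjTranspose_apply, Matrix.one_apply,
      Matrix.kroneckerMap_apply, Matrix.smul_apply, Matrix.add_apply,
      ← Prod.mk_zero_zero, ← Prod.mk_one_one, Prod.mk.injEq]

lemma trace_rho (k h μ ν θ : ℝ) (M : M4) :
    (ρMN k h μ ν θ * M).trace
      = 2 * (star ((UB ν θ * PA μ) *ᵥ gs k h) ⬝ᵥ (M *ᵥ ((UB ν θ * PA μ) *ᵥ gs k h))) := by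
  have : ρMN k h μ ν θ
      = (2:ℂ) • Matrix.vecMulVec ((UB ν θ * PA μ) *ᵥ gs k h)
          (star ((UB ν θ * PA μ) *ᵥ gs k h)) := by
    rw [ρMN, gProj, ← outer_conj (UB ν θ * PA μ) (gs k h)]
    rw [Matrix.conjTranspose_mul, PA_herm]
    noncomm_ring
  rw [this, Matrix.smul_mul, Matrix.trace_smul, trace_vmv, smul_eq_mul]
/-- explicit component vector of the post-measurement state (times 2) -/
def vQ (a b c s μ ν : ℝ) : (Fin 2 × Fin 2) → ℂ := fun p =>
  (2:ℂ)⁻¹ * (((if p = (0,0) then a*c + μ*ν*b*s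
    else if p = (0,1) then ν*a*s - μ*b*c
    else if p = (1,0) then μ*a*c + ν*b*s
    else μ*ν*a*s - b*c : ℝ)) : ℂ)

lemma phi_eq (k h μ ν θ : ℝ) :
    (UB ν θ * PA μ) *ᵥ gs k h
      = vQ (1/Real.sqrt 2*Real.sqrt (1-h/Real.sqrt (h^2+k^2)))
           (1/Real.sqrt 2*Real.sqrt (1+h/Real.sqrt (h^2+k^2)))
           (Real.cos θ) (Real.sin θ) μ ν := by
  funext p
  obtain ⟨i, j⟩ := p
  fin_cases i <;> fin_cases j <;>
  · simp only [vQ, UB, PA, gs, e00, e11, X1, Y2, σx, σy,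
      Matrix.mul_apply, Matrix.mulVec, dotProduct, Fintype.sum_prod_type,
      Fin.sum_univ_two, Matrix.kroneckerMap_apply, Matrix.one_apply, Matrix.smul_apply,
      Matrix.add_apply, Matrix.sub_apply, Matrix.of_apply, Matrix.cons_val',
      Matrix.cons_val_zero, Matrix.cons_val_one, Matrix.head_cons, Matrix.head_fin_const,
      Matrix.empty_val', Matrix.cons_val_fin_one, smul_eq_mul,
      ← Prod.mk_zero_zero, ← Prod.mk_one_one, Prod.mk.injEq]
    norm_num
    push_cast
    ring_nf
    simp only [Complex.I_sq]
    ring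
lemma M_eq (k h : ℝ) : H2m k h + Vm k h
    = (h:ℂ) • Z2 + ((2*k : ℝ):ℂ) • XX
      + ((h^2/Real.sqrt (h^2+k^2) + 2*k^2/Real.sqrt (h^2+k^2) : ℝ):ℂ) • (1 : M4) := by
  rw [H2m, Vm]
  push_cast
  rw [add_smul]
  abel

lemma key_dot (a b c s μ ν hh kk e : ℝ) :
    star (vQ a b c s μ ν) ⬝ᵥ
      ((((hh:ℝ):ℂ) • Z2 + ((kk : ℝ):ℂ) • XX + ((e : ℝ):ℂ) • (1 : M4)) *ᵥ vQ a b c s μ ν)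
    = (((hh*((a*c+μ*ν*b*s)^2 - (ν*a*s-μ*b*c)^2 + (μ*a*c+ν*b*s)^2 - (μ*ν*a*s-b*c)^2)
        + 2*kk*((a*c+μ*ν*b*s)*(μ*ν*a*s-b*c) + (ν*a*s-μ*b*c)*(μ*a*c+ν*b*s))
        + e*((a*c+μ*ν*b*s)^2 + (ν*a*s-μ*b*c)^2 + (μ*a*c+ν*b*s)^2 + (μ*ν*a*s-b*c)^2))/4 : ℝ) : ℂ) := by
  simp only [vQ, Z2, XX, σx, σz, Matrix.mulVec, dotProduct, Fintype.sum_prod_type,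
    Fin.sum_univ_two, Matrix.kroneckerMap_apply, Matrix.one_apply, Matrix.smul_apply,
    Matrix.add_apply, Matrix.of_apply, Matrix.cons_val', Matrix.cons_val_zero,
    Matrix.cons_val_one, Matrix.head_cons, Matrix.head_fin_const, Matrix.empty_val',
    Matrix.cons_val_fin_one, smul_eq_mul, Pi.star_apply, star_mul', star_inv₀,
    Complex.star_def, Complex.conj_ofReal, map_ofNat, ← Prod.mk_zero_zero, ← Prod.mk_one_one,
    Prod.mk.injEq]
  norm_num
  push_cast
  ring
lemma real_val (h k r c s a b μ ν : ℝ)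
    (ha : a^2 = (1-h/r)/2) (hb : b^2 = (1+h/r)/2) (hab : a*b = k/(2*r))
    (hcs : s^2 + c^2 = 1) (hμ : μ^2 = 1) (hν : ν^2 = 1) :
    (h*((a*c+μ*ν*b*s)^2 - (ν*a*s-μ*b*c)^2 + (μ*a*c+ν*b*s)^2 - (μ*ν*a*s-b*c)^2)
        + 2*(2*k)*((a*c+μ*ν*b*s)*(μ*ν*a*s-b*c) + (ν*a*s-μ*b*c)*(μ*a*c+ν*b*s))
        + (h^2/r + 2*k^2/r)*((a*c+μ*ν*b*s)^2 + (ν*a*s-μ*b*c)^2 + (μ*a*c+ν*b*s)^2 + (μ*ν*a*s-b*c)^2))/4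
    = ((h^2+2*k^2) - (h^2+2*k^2)*(c^2-s^2) - μ*ν*(h*k)*(2*s*c))/(2*r) := by
  have hμ' : μ = 1 ∨ μ = -1 := by
    have : (μ - 1) * (μ + 1) = 0 := by linear_combination hμ
    rcases mul_eq_zero.mp this with h' | h'
    · left; linarith
    · right; linarith
  have hν' : ν = 1 ∨ ν = -1 := by
    have : (ν - 1) * (ν + 1) = 0 := by linear_combination hν
    rcases mul_eq_zero.mp this with h' | h'
    · left; linarith
    · right; linarith
  rcases hμ' with h' | h' <;> rcases hν' with h'' | h'' <;> subst h' <;> subst h''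
  · linear_combination ((h*(c^2-s^2) + 4*k*(c*s) + (h^2/r+2*k^2/r))/2) * ha
      + ((-(h*(c^2-s^2)) - 4*k*(c*s) + (h^2/r+2*k^2/r))/2) * hb
      + ((4*h*(c*s) - 4*k*(c^2-s^2))/2) * hab
      + ((h^2/r+2*k^2/r)*(a^2+b^2)/2) * hcs
  · linear_combination ((h*(c^2-s^2) - 4*k*(c*s) + (h^2/r+2*k^2/r))/2) * ha
      + ((-(h*(c^2-s^2)) + 4*k*(c*s) + (h^2/r+2*k^2/r))/2) * hb
      + ((-(4*h*(c*s)) - 4*k*(c^2-s^2))/2) * hab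
      + ((h^2/r+2*k^2/r)*(a^2+b^2)/2) * hcs
  · linear_combination ((h*(c^2-s^2) - 4*k*(c*s) + (h^2/r+2*k^2/r))/2) * ha
      + ((-(h*(c^2-s^2)) + 4*k*(c*s) + (h^2/r+2*k^2/r))/2) * hb
      + ((-(4*h*(c*s)) - 4*k*(c^2-s^2))/2) * hab
      + ((h^2/r+2*k^2/r)*(a^2+b^2)/2) * hcs
  · linear_combination ((h*(c^2-s^2) + 4*k*(c*s) + (h^2/r+2*k^2/r))/2) * ha
      + ((-(h*(c^2-s^2)) - 4*k*(c*s) + (h^2/r+2*k^2/r))/2) * hb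
      + ((4*h*(c*s) - 4*k*(c^2-s^2))/2) * hab
      + ((h^2/r+2*k^2/r)*(a^2+b^2)/2) * hcs
/-- State distinguishability via the local energy: at the QET-optimal
angle, `Tr[ρ(μ,μ,θ)·(H₂+V)] < 0` while `Tr[ρ(μ,−μ,θ)·(H₂+V)] > 0`, so the prover can
tell from the sign of the observed local energy whether the verifier applied
`Q₁ = U_B(μ,θ)` or `Q₂ = U_B(−μ,θ)`. -/
theorem qet_distinguish_energy (k h : ℝ) (hk : 0 < k) (hh : 0 < h) (θ : ℝ)
    (hcos : Real.cos (2 * θ) =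
      (h ^ 2 + 2 * k ^ 2) / Real.sqrt ((h ^ 2 + 2 * k ^ 2) ^ 2 + (h * k) ^ 2))
    (hsin : Real.sin (2 * θ) =
      h * k / Real.sqrt ((h ^ 2 + 2 * k ^ 2) ^ 2 + (h * k) ^ 2)) :
    ∀ μ ∈ ({-1, 1} : Set ℝ),
      (ρMN k h μ μ θ * (H2m k h + Vm k h)).trace < 0 ∧
      0 < (ρMN k h μ (-μ) θ * (H2m k h + Vm k h)).trace := by
  intro μ hμmem
  simp only [Set.mem_insert_iff, Set.mem_singleton_iff] at hμmem
  -- basic facts about r = √(h²+k²)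
  have hr : 0 < Real.sqrt (h^2+k^2) := Real.sqrt_pos.mpr (by positivity)
  have hr2 : Real.sqrt (h^2+k^2) ^ 2 = h^2+k^2 := Real.sq_sqrt (by positivity)
  have hhr : h ≤ Real.sqrt (h^2+k^2) := by
    nlinarith [hr, hr2]
  have h1n : (0:ℝ) ≤ 1 - h / Real.sqrt (h^2+k^2) := by
    rw [sub_nonneg, div_le_one hr]; exact hhr
  have h2n : (0:ℝ) ≤ 1 + h / Real.sqrt (h^2+k^2) := by positivity
  have ha : (1/Real.sqrt 2*Real.sqrt (1-h/Real.sqrt (h^2+k^2)))^2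
      = (1 - h/Real.sqrt (h^2+k^2))/2 := by
    rw [mul_pow, div_pow, one_pow, Real.sq_sqrt (by norm_num : (0:ℝ) ≤ 2),
      Real.sq_sqrt h1n]; ring
  have hb : (1/Real.sqrt 2*Real.sqrt (1+h/Real.sqrt (h^2+k^2)))^2
      = (1 + h/Real.sqrt (h^2+k^2))/2 := by
    rw [mul_pow, div_pow, one_pow, Real.sq_sqrt (by norm_num : (0:ℝ) ≤ 2),
      Real.sq_sqrt h2n]; ring
  have hab : (1/Real.sqrt 2*Real.sqrt (1-h/Real.sqrt (h^2+k^2)))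
      * (1/Real.sqrt 2*Real.sqrt (1+h/Real.sqrt (h^2+k^2)))
      = k/(2*Real.sqrt (h^2+k^2)) := by
    rw [mul_mul_mul_comm, ← Real.sqrt_mul h1n]
    have hx : (1-h/Real.sqrt (h^2+k^2))*(1+h/Real.sqrt (h^2+k^2))
        = (k/Real.sqrt (h^2+k^2))^2 := by
      field_simp
      linear_combination hr2
    rw [hx, Real.sqrt_sq (by positivity)]
    have h12 : 1/Real.sqrt 2 * (1/Real.sqrt 2) = 1/2 := by
      rw [div_mul_div_comm, one_mul, Real.mul_self_sqrt (by norm_num : (0:ℝ) ≤ 2)]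
    rw [h12]
    ring
  have hcs : Real.sin θ^2 + Real.cos θ^2 = 1 := Real.sin_sq_add_cos_sq θ
  -- facts about D = √((h²+2k²)²+(hk)²)
  have hDpos : 0 < Real.sqrt ((h^2+2*k^2)^2+(h*k)^2) := Real.sqrt_pos.mpr (by positivity)
  have hD2 : Real.sqrt ((h^2+2*k^2)^2+(h*k)^2)^2 = (h^2+2*k^2)^2+(h*k)^2 :=
    Real.sq_sqrt (by positivity)
  have hAD : h^2+2*k^2 < Real.sqrt ((h^2+2*k^2)^2+(h*k)^2) := by
    nlinarith [hDpos, hD2, mul_pos hh hk]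
  have hDne : Real.sqrt ((h^2+2*k^2)^2+(h*k)^2) ≠ 0 := ne_of_gt hDpos
  have hrne : Real.sqrt (h^2+k^2) ≠ 0 := ne_of_gt hr
  -- the master trace computation
  have master : ∀ ν : ℝ, ν^2 = 1 → μ^2 = 1 →
      (ρMN k h μ ν θ * (H2m k h + Vm k h)).trace
        = ((((h^2+2*k^2)*Real.sqrt ((h^2+2*k^2)^2+(h*k)^2) - (h^2+2*k^2)^2
            - μ*ν*(h*k)^2)/(Real.sqrt ((h^2+2*k^2)^2+(h*k)^2)*Real.sqrt (h^2+k^2)) : ℝ) : ℂ) := by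
    intro ν hν2 hμ2
    rw [trace_rho, M_eq, phi_eq, key_dot,
      real_val h k (Real.sqrt (h^2+k^2)) (Real.cos θ) (Real.sin θ) _ _ μ ν ha hb hab hcs hμ2 hν2]
    norm_cast
    rw [← Real.cos_two_mul', ← Real.sin_two_mul, hcos, hsin]
    field_simp
  have hμ2 : μ^2 = 1 := by rcases hμmem with h' | h' <;> subst h' <;> norm_num
  have hν2 : (-μ)^2 = 1 := by rw [neg_pow]; simp [hμ2]
  have hμμ : μ * μ = 1 := by nlinarith [hμ2]
  have hμν : μ * (-μ) = -1 := by nlinarith [hμ2]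
  constructor
  · rw [master μ hμ2 hμ2, hμμ]
    have hnum : (h^2+2*k^2)*Real.sqrt ((h^2+2*k^2)^2+(h*k)^2) - (h^2+2*k^2)^2
        - 1*(h*k)^2 < 0 := by nlinarith [hAD, hDpos, hD2]
    have : ((h^2+2*k^2)*Real.sqrt ((h^2+2*k^2)^2+(h*k)^2) - (h^2+2*k^2)^2
        - 1*(h*k)^2)/(Real.sqrt ((h^2+2*k^2)^2+(h*k)^2)*Real.sqrt (h^2+k^2)) < 0 :=
      div_neg_of_neg_of_pos hnum (by positivity)
    exact_mod_cast this
  · rw [master (-μ) hν2 hμ2, hμν]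
    have hnum : 0 < (h^2+2*k^2)*Real.sqrt ((h^2+2*k^2)^2+(h*k)^2) - (h^2+2*k^2)^2
        - (-1)*(h*k)^2 := by nlinarith [hAD, hDpos, mul_pos hh hk]
    have : 0 < ((h^2+2*k^2)*Real.sqrt ((h^2+2*k^2)^2+(h*k)^2) - (h^2+2*k^2)^2
        - (-1)*(h*k)^2)/(Real.sqrt ((h^2+2*k^2)^2+(h*k)^2)*Real.sqrt (h^2+k^2)) :=
      div_pos hnum (by positivity)
    exact_mod_cast this
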